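/- Let G be a group, P a finite p-subgroup of G, and Δ a finite G-set. Suppose there are G-module maps φ : ℤ[G/P] → ℤΔ and augmentations ε_f : ℤΔ → ℤ, ε_P : ℤ[G/P] → ℤ (sending each basis element to 1) with ε_f ∘ φ = ε_P. Then P stabilizes some point of Δ. -/

import Mathlib

/-- Let `P` be a finite `p`-subgroup of `G` and `Δ` a finite `G`-set.  If there is a
`G`-equivariant map `φ : ℤ[G/P] → ℤΔ` commuting with the augmentations, then `P`
stabilizes some point of `Δ`. -/
theorem stmt13 (G : Type*) [Group G] (p : ℕ) (hp : p.Prime)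
    (P : Subgroup G) [Finite P] (hP : IsPGroup p P)
    (Δ : Type*) [Fintype Δ] [MulAction G Δ]
    (φ : ((G ⧸ P) →₀ ℤ) →ₗ[ℤ] (Δ →₀ ℤ))
    (hφ : ∀ g : G, φ ∘ₗ Finsupp.lmapDomain ℤ ℤ (fun x : G ⧸ P => g • x)
        = Finsupp.lmapDomain ℤ ℤ (fun x : Δ => g • x) ∘ₗ φ)
    (haug : ∀ x : (G ⧸ P) →₀ ℤ, (φ x).sum (fun _ n => n) = x.sum (fun _ n => n)) :
    ∃ δ : Δ, ∀ g ∈ P, g • δ = δ := by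
  classical
  by_contra hcon
  push_neg at hcon
  haveI : Fact p.Prime := ⟨hp⟩
  set x0 : (G ⧸ P) →₀ ℤ := Finsupp.single ((1 : G) : G ⧸ P) 1 with hx0
  set y : Δ →₀ ℤ := φ x0 with hy
  -- P-invariance of y
  have hfix : ∀ g ∈ P, ∀ δ : Δ, y (g • δ) = y δ := by
    intro g hg δ
    have h1 : Finsupp.lmapDomain ℤ ℤ (fun x : G ⧸ P => g • x) x0 = x0 := by
      rw [hx0, Finsupp.lmapDomain_apply, Finsupp.mapDomain_single]
      congr 1
      show (QuotientGroup.mk (g • (1:G)) : G ⧸ P) = QuotientGroup.mk 1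
      rw [QuotientGroup.eq]
      simpa using hg
    have h2 := LinearMap.congr_fun (hφ g) x0
    simp only [LinearMap.comp_apply, h1] at h2
    -- h2 : φ x0 = ofMulAction ℤ G Δ g (φ x0)
    have h3 := congrArg (fun (f : Δ →₀ ℤ) => f (g • δ)) h2
    simp only [Finsupp.lmapDomain_apply] at h3
    rw [Finsupp.mapDomain_apply (MulAction.injective g)] at h3
    exact h3
  -- total sum is 1
  have hsum : ∑ δ : Δ, y δ = 1 := by
    have h := haug x0
    rw [Finsupp.sum_fintype _ _ (fun _ => rfl)] at h
    rw [h, hx0, Finsupp.sum_single_index]; rfl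
  -- pass to ZMod p
  have hzero : ∑ δ : Δ, ((y δ : ℤ) : ZMod p) = 0 := by
    rw [← Fintype.sum_equiv (Equiv.sigmaFiberEquiv
        (@Quotient.mk'' Δ (MulAction.orbitRel P Δ)))
        (fun s => ((y s.2 : ℤ) : ZMod p)) (fun δ => ((y δ : ℤ) : ZMod p)) (fun s => rfl)]
    rw [← Finset.univ_sigma_univ, Finset.sum_sigma]
    refine Finset.sum_eq_zero fun a _ => ?_
    induction a using Quotient.inductionOn' with
    | h b =>
      have hconst : ∀ x : {x // (Quotient.mk'' x : Quotient (MulAction.orbitRel P Δ))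
          = Quotient.mk'' b}, y (x : Δ) = y b := by
        rintro ⟨x, hx⟩
        obtain ⟨g, rfl⟩ := Quotient.exact' hx
        exact hfix (g : G) g.2 b
      have : ∑ x : {x // (Quotient.mk'' x : Quotient (MulAction.orbitRel P Δ))
          = Quotient.mk'' b}, ((y (x : Δ) : ℤ) : ZMod p)
          = (Fintype.card {x // (Quotient.mk'' x : Quotient (MulAction.orbitRel P Δ))
          = Quotient.mk'' b}) * ((y b : ℤ) : ZMod p) := by
        rw [Finset.sum_congr rfl (fun x _ => by rw [hconst x])]
        simp [Finset.sum_const, mul_comm]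
      rw [this]
      have key : Fintype.card {x // (Quotient.mk'' x : Quotient (MulAction.orbitRel P Δ))
          = Quotient.mk'' b} = Fintype.card (MulAction.orbit P b) := by
        simp only [Quotient.eq'']
        congr
      obtain ⟨n, hn⟩ := hP.card_orbit b
      rw [Nat.card_eq_fintype_card] at hn
      have hn0 : n ≠ 0 := by
        intro h0
        rw [h0, pow_zero] at hn
        have hbfix := MulAction.mem_fixedPoints_iff_card_orbit_eq_one.mpr hn
        obtain ⟨g, hg, hgne⟩ := hcon b
        exact hgne (hbfix ⟨g, hg⟩)
      have : ((Fintype.card {x // (Quotient.mk'' x : Quotient (MulAction.orbitRel P Δ))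
          = Quotient.mk'' b} : ℕ) : ZMod p) = 0 := by
        rw [key, hn, ZMod.natCast_eq_zero_iff]
        exact dvd_pow_self p hn0
      rw [this, zero_mul]
  rw [← Int.cast_sum, hsum] at hzero
  simp at hzero
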